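/- arXiv:2408.13477 — 5 statements merged into one kernel-verified Lean document; each statement's English description precedes it below -/
import Mathlib

section
/- Let G be a finite group, V a proper subgroup of finite index, and N a normal subgroup of G contained in V with N elementary abelian of order p^[G:V], where p is prime. Consider G acting transitively on [G:V]·p points via an embedding into the wreath product AGL_1(p) ≀ G_V where G_V is the image of G acting on cosets of V and the kernel of the projection G → G_V is N of full order p^[G:V]. Then the proportion of elements of G acting as a single full cycle on the [G:V]·p points is at most (p-1)/p times the proportion of full cycles in G_V. -/
lemma aux_isCycleOn {α : Type*} [Fintype α] [DecidableEq α] {σ : Equiv.Perm α}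
    (h1 : σ.IsCycle) (h2 : σ.support = Finset.univ) :
    σ.IsCycleOn (Finset.univ : Finset α) := by
  have := h1.isCycleOn
  convert this using 1
  ext x
  simp only [Finset.coe_univ, Set.mem_univ, Set.mem_setOf_eq, true_iff]
  have : x ∈ σ.support := h2 ▸ Finset.mem_univ x
  exact Equiv.Perm.mem_support.mp this

lemma aux_pow_fix {α : Type*} [Fintype α] [DecidableEq α] {σ : Equiv.Perm α}
    (h1 : σ.IsCycle) (h2 : σ.support = Finset.univ) {x : α} {k : ℕ}
    (h : (σ ^ k) x = x) : Fintype.card α ∣ k := by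
  have := (aux_isCycleOn h1 h2).pow_apply_eq (Finset.mem_univ x) (n := k)
  simpa [Finset.card_univ] using this.mp h


/-- Let `G` be a finite group, `V` a proper subgroup (of finite index),
`p` a prime, and let `G` act faithfully and transitively on `[G:V]·p` points `X` via
an embedding `φ` into the wreath product `AGL₁(p) ≀ G_V`: the points are organized in
blocks indexed by `G ⧸ V` (via the bijective parametrization `ι`), `G` permutes the
blocks through its coset action on `G ⧸ V`, and acts on each block (identified with
`ZMod p`) by affine maps `z ↦ a*z + b`. Assume the kernel `N` of the projection
`G → G_V` (the coset action) is elementary abelian of the maximal possible order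
`p^[G:V]`. Then the proportion (in `G`, equivalently in the faithful image `G_U`) of
elements acting as a single full cycle on `X` is at most `(p-1)/p` times the
proportion (in `G`, equivalently in `G_V`) of elements acting as full cycles on
`G ⧸ V`. -/
theorem full_cycle_proportion_le_of_elementary_abelian_kernel
    {G : Type*} [Group G] [Fintype G] (V : Subgroup G) (hV : V ≠ ⊤)
    [Fintype (G ⧸ V)] [DecidableEq (G ⧸ V)]
    (p : ℕ) (hp : p.Prime) [NeZero p]
    {X : Type*} [Fintype X] [DecidableEq X]
    (φ : G →* Equiv.Perm X) (hinj : Function.Injective φ)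
    (htrans : ∀ x y : X, ∃ g : G, φ g x = y)
    (hcard : Fintype.card X = V.index * p)
    (ι : G ⧸ V → ZMod p → X)
    (hbij : Function.Bijective (fun qz : (G ⧸ V) × ZMod p => ι qz.1 qz.2))
    (haff : ∀ (g : G) (q : G ⧸ V), ∃ a : (ZMod p)ˣ, ∃ b : ZMod p,
      ∀ z : ZMod p, φ g (ι q z) = ι (g • q) ((a : ZMod p) * z + b))
    (N : Subgroup G) (hN : N = (MulAction.toPermHom G (G ⧸ V)).ker)
    (hNab : ∀ a b : G, a ∈ N → b ∈ N → a * b = b * a)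
    (hNelem : ∀ a ∈ N, a ^ p = 1)
    (hNcard : Nat.card N = p ^ V.index) :
    (Nat.card {g : G // (φ g).IsCycle ∧ (φ g).support = Finset.univ} : ℚ) / Nat.card G ≤
      ((p : ℚ) - 1) / p *
        ((Nat.card {g : G // (MulAction.toPermHom G (G ⧸ V) g).IsCycle ∧
            (MulAction.toPermHom G (G ⧸ V) g).support = Finset.univ} : ℚ) / Nat.card G) := by
  classical
  haveI : Fact p.Prime := ⟨hp⟩
  have hp2 : 2 ≤ p := hp.two_le
  set π : G →* Equiv.Perm (G ⧸ V) := MulAction.toPermHom G (G ⧸ V) with hπdef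
  have hπ : ∀ (g : G) (q : G ⧸ V), π g q = g • q := fun g q => rfl
  set n : ℕ := Fintype.card (G ⧸ V) with hndef
  have hn : V.index = n := by rw [Subgroup.index_eq_card, Nat.card_eq_fintype_card]
  -- injectivity of ι
  have hιinj : ∀ {q q' : G ⧸ V} {z z' : ZMod p}, ι q z = ι q' z' → q = q' ∧ z = z' := by
    intro q q' z z' h
    have := hbij.1 (a₁ := (q, z)) (a₂ := (q', z')) h
    exact ⟨congrArg Prod.fst this, congrArg Prod.snd this⟩
  -- blocks
  have hXsurj : ∀ x : X, ∃ q z, ι q z = x := by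
    intro x
    obtain ⟨⟨q, z⟩, h⟩ := hbij.2 x
    exact ⟨q, z, h⟩
  -- Nontrivial quotient
  have hnontriv : Nontrivial (G ⧸ V) := by
    obtain ⟨g₀, hg₀⟩ : ∃ g₀ : G, g₀ ∉ V := by
      by_contra h; push_neg at h; exact hV ((Subgroup.eq_top_iff' V).mpr h)
    refine ⟨⟨QuotientGroup.mk g₀, QuotientGroup.mk 1, fun h => hg₀ ?_⟩⟩
    have := QuotientGroup.eq.mp h
    simpa using this
  have hn2 : 2 ≤ n := Fintype.one_lt_card
  have hn0 : 0 < n := by omega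
  have hcardX : Fintype.card X = n * p := by rw [hcard, hn]
  -- block map lemma
  have hblk : ∀ (g : G) (q : G ⧸ V) (z : ZMod p), ∃ z', φ g (ι q z) = ι (g • q) z' := by
    intro g q z
    obtain ⟨a, b, hab⟩ := haff g q
    exact ⟨_, hab z⟩
  -- powers respect blocks
  have hblkpow : ∀ (g : G) (k : ℕ) (q : G ⧸ V) (z : ZMod p),
      ∃ z', ((φ g) ^ k) (ι q z) = ι ((π g ^ k) q) z' := by
    intro g k
    induction k with
    | zero => intro q z; exact ⟨z, by simp⟩
    | succ k ih =>
      intro q z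
      obtain ⟨z₁, h1⟩ := hblk g q z
      obtain ⟨z', hz'⟩ := ih (g • q) z₁
      refine ⟨z', ?_⟩
      have e1 : (φ g) ^ (k + 1) = (φ g) ^ k * (φ g) := pow_succ _ _
      have e2 : (π g) ^ (k + 1) = (π g) ^ k * (π g) := pow_succ _ _
      rw [e1, Equiv.Perm.mul_apply, h1, hz', e2, Equiv.Perm.mul_apply, hπ]
  -- F1 : full cycle on X implies full cycle on blocks
  have hF1 : ∀ g : G, (φ g).IsCycle ∧ (φ g).support = Finset.univ →
      (π g).IsCycle ∧ (π g).support = Finset.univ := by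
    intro g ⟨hc, hs⟩
    have hco : (φ g).IsCycleOn (Finset.univ : Finset X) := aux_isCycleOn hc hs
    -- transitivity on X
    have htr : ∀ x y : X, ∃ k : ℕ, ((φ g) ^ k) x = y := by
      intro x y
      have : (φ g).SameCycle x y := hco.2 (by simp) (by simp)
      obtain ⟨k, _, hk⟩ := this.exists_pow_eq'
      exact ⟨k, hk⟩
    -- transitivity on blocks
    have htrq : ∀ q q' : G ⧸ V, ∃ k : ℕ, ((π g) ^ k) q = q' := by
      intro q q'
      obtain ⟨k, hk⟩ := htr (ι q 0) (ι q' 0)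
      obtain ⟨z', hz'⟩ := hblkpow g k q 0
      rw [hk] at hz'
      exact ⟨k, (hιinj hz'.symm).1⟩
    -- every block is moved
    have hmv : ∀ q : G ⧸ V, (π g) q ≠ q := by
      intro q hq
      obtain ⟨q', hq'⟩ := exists_ne q
      obtain ⟨k, hk⟩ := htrq q q'
      have : ((π g) ^ k) q = q := by
        exact Equiv.Perm.pow_apply_eq_self_of_apply_eq_self hq k
      exact hq' (hk ▸ this)
    constructor
    · obtain ⟨q, q', hqq'⟩ := hnontriv
      refine ⟨q, hmv q, fun y _ => ?_⟩
      obtain ⟨k, hk⟩ := htrq q y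
      exact ⟨(k : ℤ), by rwa [zpow_natCast]⟩
    · exact Finset.eq_univ_iff_forall.mpr fun q => Equiv.Perm.mem_support.mpr (hmv q)
  -- N acts by translations
  have hNtrans : ∀ m : G, m ∈ N → ∃ t : G ⧸ V → ZMod p,
      ∀ (q : G ⧸ V) (z : ZMod p), φ m (ι q z) = ι q (z + t q) := by
    intro m hm
    have hπm : π m = 1 := by rw [hN] at hm; exact hm
    have hmq : ∀ q : G ⧸ V, m • q = q := by
      intro q
      have := congrArg (fun σ : Equiv.Perm (G ⧸ V) => σ q) hπm
      simpa [hπ] using this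
    have key : ∀ q : G ⧸ V, ∃ t : ZMod p, ∀ z, φ m (ι q z) = ι q (z + t) := by
      intro q
      obtain ⟨a, b, hab⟩ := haff m q
      rw [hmq q] at hab
      have hpow : ∀ k : ℕ, ∃ c : ZMod p,
          ∀ z, ((φ m) ^ k) (ι q z) = ι q ((a : ZMod p) ^ k * z + c) := by
        intro k
        induction k with
        | zero => exact ⟨0, by simp⟩
        | succ k ih =>
          obtain ⟨c, hc⟩ := ih
          refine ⟨(a : ZMod p) * c + b, fun z => ?_⟩
          have e1 : (φ m) ^ (k + 1) = (φ m) * (φ m) ^ k := by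
            rw [pow_succ']
          rw [e1, Equiv.Perm.mul_apply, hc, hab]
          congr 1
          ring
      obtain ⟨c, hc⟩ := hpow p
      have h1 : (φ m) ^ p = 1 := by rw [← map_pow, hNelem m hm, map_one]
      have heq : ∀ z : ZMod p, z = (a : ZMod p) ^ p * z + c := by
        intro z
        have := hc z
        rw [h1] at this
        simpa using (hιinj this.symm).2.symm
      have hc0 : c = 0 := by have := heq 0; simpa using this.symm
      have hap : (a : ZMod p) ^ p = 1 := by
        have := heq 1
        rw [hc0, add_zero, mul_one] at this
        exact this.symm
      have hapu : a ^ p = 1 := by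
        ext
        rw [Units.val_pow_eq_pow_val, hap, Units.val_one]
      have hd1 : orderOf a ∣ p := orderOf_dvd_of_pow_eq_one hapu
      have hd2 : orderOf a ∣ p - 1 := by
        have := orderOf_dvd_card (x := a)
        rwa [ZMod.card_units] at this
      have ha1 : a = 1 := by
        rw [← orderOf_eq_one_iff]
        have hcop : Nat.Coprime p (p - 1) :=
          (Nat.coprime_self_sub_right (by omega)).mpr (Nat.coprime_one_right p)
        exact Nat.eq_one_of_dvd_coprimes hcop hd1 hd2
      refine ⟨b, fun z => ?_⟩
      rw [hab, ha1]
      congr 1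
      simp [add_comm]
    choose t ht using key
    exact ⟨t, ht⟩
  -- base block
  set q₀ : G ⧸ V := QuotientGroup.mk 1 with hq₀def
  -- the special translation m₀
  obtain ⟨m₀, hm₀N, hm₀q₀, hm₀fix⟩ :
      ∃ m₀ : G, m₀ ∈ N ∧ (∀ z, φ m₀ (ι q₀ z) = ι q₀ (z + 1)) ∧
        (∀ q, q ≠ q₀ → ∀ z, φ m₀ (ι q z) = ι q z) := by
    have hTex2 : ∀ m : N, ∃ t : G ⧸ V → ZMod p,
        ∀ q z, φ (m : G) (ι q z) = ι q (z + t q) := fun m => hNtrans m m.2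
    choose T hT using hTex2
    have hTinj : Function.Injective T := by
      intro m m' h
      apply Subtype.ext
      apply hinj
      apply Equiv.ext
      intro x
      obtain ⟨q, z, rfl⟩ := hXsurj x
      rw [hT m, hT m', h]
    have hTbij : Function.Bijective T := by
      rw [Fintype.bijective_iff_injective_and_card]
      refine ⟨hTinj, ?_⟩
      rw [Fintype.card_fun, ZMod.card, ← Nat.card_eq_fintype_card, hNcard, hn]
    obtain ⟨m₀', hm₀'⟩ := hTbij.2 (fun q => if q = q₀ then 1 else 0)
    refine ⟨(m₀' : G), m₀'.2, fun z => ?_, fun q hq z => ?_⟩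
    · rw [hT m₀', hm₀']
      simp
    · rw [hT m₀', hm₀']
      simp [hq]
  have hm₀p : m₀ ^ p = 1 := hNelem m₀ hm₀N
  have hπm₀ : π m₀ = 1 := by rw [hN] at hm₀N; exact hm₀N
  -- the subtype of full cycles on blocks
  set Zt := {g : G // (π g).IsCycle ∧ (π g).support = Finset.univ} with hZtdef
  have hord : ∀ g : Zt, (π (g : G)) ^ n = 1 := by
    intro g
    have h1 : orderOf (π (g : G)) = n := by
      rw [g.2.1.orderOf, g.2.2, Finset.card_univ]
    rw [← h1]
    exact pow_orderOf_eq_one _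
  have hgnq : ∀ (g : Zt) (q : G ⧸ V), ((g : G) ^ n) • q = q := by
    intro g q
    have h1 : π ((g : G) ^ n) = 1 := by rw [map_pow]; exact hord g
    have h2 := congrArg (fun σ : Equiv.Perm (G ⧸ V) => σ q) h1
    rw [← hπ ((g : G) ^ n) q]
    simpa using h2
  have hABex : ∀ g : Zt, ∃ (a : (ZMod p)ˣ) (b : ZMod p),
      ∀ z, φ ((g : G) ^ n) (ι q₀ z) = ι q₀ ((a : ZMod p) * z + b) := by
    intro g
    obtain ⟨a, b, hab⟩ := haff ((g : G) ^ n) q₀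
    rw [hgnq g q₀] at hab
    exact ⟨a, b, hab⟩
  choose A B hAB using hABex
  -- if B g = 0 then g is not a full cycle on X
  have hB0 : ∀ g : Zt, B g = 0 →
      ¬((φ (g : G)).IsCycle ∧ (φ (g : G)).support = Finset.univ) := by
    intro g h0 ⟨hc, hs⟩
    have h1 := hAB g 0
    rw [h0] at h1
    simp only [mul_zero, add_zero, zero_add] at h1
    have hfix : ((φ (g : G)) ^ n) (ι q₀ 0) = ι q₀ 0 := by
      rw [← map_pow]; exact h1
    have hdvd := aux_pow_fix hc hs hfix
    rw [hcardX] at hdvd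
    have h2 := Nat.le_of_dvd hn0 hdvd
    have h3 : n * 2 ≤ n * p := Nat.mul_le_mul_left n hp2
    omega
  -- uniqueness of the affine data
  have huniq : ∀ (g : Zt) (a : (ZMod p)ˣ) (b : ZMod p),
      (∀ z, φ ((g : G) ^ n) (ι q₀ z) = ι q₀ ((a : ZMod p) * z + b)) →
      A g = a ∧ B g = b := by
    intro g a b h
    have h0 : (A g : ZMod p) * 0 + B g = (a : ZMod p) * 0 + b :=
      (hιinj ((hAB g 0).symm.trans (h 0))).2
    have h1 : (A g : ZMod p) * 1 + B g = (a : ZMod p) * 1 + b :=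
      (hιinj ((hAB g 1).symm.trans (h 1))).2
    simp only [mul_zero, zero_add, mul_one] at h0 h1
    refine ⟨Units.ext ?_, h0⟩
    have := h1
    rw [h0] at this
    exact add_right_cancel this
  -- intermediate powers move the base block
  have hnotq₀ : ∀ (g : Zt) (k : ℕ), 0 < k → k < n → ((π (g : G)) ^ k) q₀ ≠ q₀ := by
    intro g k hk1 hk2 h
    have hdvd := aux_pow_fix g.2.1 g.2.2 h
    rw [← hndef] at hdvd
    have := Nat.le_of_dvd hk1 hdvd
    omega
  -- multiplying by m₀ preserves being a block full cycle
  have hFCVmul : ∀ g : Zt, ∀ k : ℕ, (π ((g : G) * m₀ ^ k)).IsCycle ∧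
      (π ((g : G) * m₀ ^ k)).support = Finset.univ := by
    intro g k
    have : π ((g : G) * m₀ ^ k) = π (g : G) := by
      rw [map_mul, map_pow, hπm₀, one_pow, mul_one]
    rw [this]
    exact g.2
  -- the key computation
  have hkey : ∀ (g : Zt) (z : ZMod p) (k : ℕ), 1 ≤ k → k ≤ n →
      ((φ ((g : G) * m₀)) ^ k) (ι q₀ z) = ((φ (g : G)) ^ k) (ι q₀ (z + 1)) := by
    intro g z k hk1 hkn
    induction k, hk1 using Nat.le_induction with
    | base =>
      rw [pow_one, pow_one, map_mul, Equiv.Perm.mul_apply, hm₀q₀]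
    | succ k hk1 ih =>
      have hkltn : k < n := by omega
      obtain ⟨z', hz'⟩ := hblkpow (g : G) k q₀ (z + 1)
      have hmoved : ((π (g : G)) ^ k) q₀ ≠ q₀ := hnotq₀ g k (by omega) hkltn
      have e1 : (φ ((g : G) * m₀)) ^ (k + 1) = (φ ((g : G) * m₀)) * (φ ((g : G) * m₀)) ^ k :=
        pow_succ' _ _
      have e2 : (φ (g : G)) ^ (k + 1) = (φ (g : G)) * (φ (g : G)) ^ k := pow_succ' _ _
      rw [e1, Equiv.Perm.mul_apply, ih (by omega), hz', map_mul, Equiv.Perm.mul_apply,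
        hm₀fix _ hmoved, e2, Equiv.Perm.mul_apply, hz']
  -- the A/B data shifts
  have hiter : ∀ (g : Zt) (k : ℕ), ∃ g' : Zt, (g' : G) = (g : G) * m₀ ^ k ∧
      A g' = A g ∧ B g' = B g + (k : ZMod p) * (A g : ZMod p) := by
    intro g k
    induction k with
    | zero =>
      refine ⟨g, by simp, rfl, by simp⟩
    | succ k ih =>
      obtain ⟨g', hg', hA', hB'⟩ := ih
      refine ⟨⟨(g' : G) * m₀, by rw [hg', mul_assoc, ← pow_succ]; exact hFCVmul g (k+1)⟩,
        by simp only [hg', mul_assoc, ← pow_succ], ?_⟩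
      set g'' : Zt := ⟨(g' : G) * m₀, by rw [hg', mul_assoc, ← pow_succ]; exact hFCVmul g (k+1)⟩
      have hcomp : ∀ z, φ ((g'' : G) ^ n) (ι q₀ z) =
          ι q₀ ((A g' : ZMod p) * z + (B g' + (A g' : ZMod p))) := by
        intro z
        have : (g'' : G) = (g' : G) * m₀ := rfl
        rw [map_pow, this, hkey g' z n (by omega) le_rfl, ← map_pow, hAB g' (z + 1)]
        congr 1
        ring
      obtain ⟨hA'', hB''⟩ := huniq g'' (A g') (B g' + (A g' : ZMod p)) hcomp
      constructor
      · rw [hA'', hA']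
      · rw [hB'', hB', hA']
        push_cast
        ring
  choose step hstep hstepA hstepB using hiter
  -- the twisting coordinate
  set u : Zt → ZMod p := fun g => (B g) * ((A g)⁻¹ : (ZMod p)ˣ) with hudef
  have hBu : ∀ g : Zt, (u g) * (A g : ZMod p) = B g := by
    intro g
    rw [show u g = B g * ((A g)⁻¹ : (ZMod p)ˣ) from rfl,
      mul_assoc, ← Units.val_mul, inv_mul_cancel, Units.val_one, mul_one]
  have hu0 : ∀ g : Zt, u g = 0 ↔ B g = 0 := by
    intro g
    constructor
    · intro h; rw [← hBu g, h, zero_mul]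
    · intro h
      rw [show u g = B g * ((A g)⁻¹ : (ZMod p)ˣ) from rfl, h, zero_mul]
  have hval : ∀ x : ZMod p, ((x.val : ℕ) : ZMod p) = x := fun x =>
    ZMod.natCast_rightInverse x
  have hm₀mod : ∀ j k : ℕ, ((j : ZMod p) = (k : ZMod p)) → m₀ ^ j = m₀ ^ k := by
    intro j k h
    rw [pow_eq_pow_mod j hm₀p, pow_eq_pow_mod k hm₀p]
    congr 1
    exact (ZMod.natCast_eq_natCast_iff j k p).mp h
  have hBstep : ∀ (g : Zt) (v : ZMod p), B (step g v.val) = B g + v * (A g : ZMod p) := by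
    intro g v
    rw [hstepB, hval]
  have hAstep : ∀ (g : Zt) (v : ZMod p), A (step g v.val) = A g := fun g v => hstepA g _
  have hstepadd : ∀ (g : Zt) (v w : ZMod p), step (step g v.val) w.val = step g (v + w).val := by
    intro g v w
    apply Subtype.ext
    rw [hstep, hstep, hstep, mul_assoc, ← pow_add]
    congr 1
    apply hm₀mod
    push_cast [hval]
    rfl
  have hstep0 : ∀ g : Zt, step g ((0 : ZMod p)).val = g := by
    intro g
    apply Subtype.ext
    rw [hstep]
    simp [ZMod.val_zero]
  -- the equivalence
  let E : Zt ≃ {g : Zt // B g = 0} × ZMod p :=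
  { toFun := fun g => (⟨step g (-(u g)).val, by rw [hBstep, ← hBu g]; ring⟩, u g)
    invFun := fun x => step x.1.1 x.2.val
    left_inv := fun g => by
      simp only []
      rw [hstepadd, neg_add_cancel, hstep0]
    right_inv := fun x => by
      obtain ⟨⟨g₀, hg₀⟩, v⟩ := x
      have hB' : B (step g₀ v.val) = v * (A g₀ : ZMod p) := by rw [hBstep, hg₀, zero_add]
      have hA' : A (step g₀ v.val) = A g₀ := hAstep g₀ v
      have hu' : u (step g₀ v.val) = v := by
        rw [show u (step g₀ v.val) =
            B (step g₀ v.val) * ((A (step g₀ v.val))⁻¹ : (ZMod p)ˣ) from rfl,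
          hB', hA', mul_assoc, ← Units.val_mul, mul_inv_cancel, Units.val_one, mul_one]
      simp only [hu']
      refine Prod.ext ?_ rfl
      apply Subtype.ext
      apply Subtype.ext
      show ((step (step g₀ v.val) (-v).val : Zt) : G) = (g₀ : G)
      rw [hstepadd, add_neg_cancel, hstep0] }
  have hcardZt : Nat.card Zt = Nat.card {g : Zt // B g = 0} * p := by
    rw [Nat.card_congr E, Nat.card_prod, Nat.card_zmod]
  have hne : Nat.card {g : Zt // B g ≠ 0} = (p - 1) * Nat.card {g : Zt // B g = 0} := by
    have E1 : {g : Zt // B g ≠ 0} ≃ {x : {g : Zt // B g = 0} × ZMod p // x.2 ≠ 0} :=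
      E.subtypeEquiv (fun g => not_congr (hu0 g).symm)
    have E2 : {x : {g : Zt // B g = 0} × ZMod p // x.2 ≠ 0} ≃
        {x : ZMod p × {g : Zt // B g = 0} // x.1 ≠ 0} :=
      (Equiv.prodComm _ _).subtypeEquiv (fun x => Iff.rfl)
    have E3 := Equiv.prodSubtypeFstEquivSubtypeProd
      (α := ZMod p) (β := {g : Zt // B g = 0}) (p := fun z => z ≠ 0)
    rw [Nat.card_congr (E1.trans (E2.trans E3)), Nat.card_prod]
    congr 1
    rw [Nat.card_congr (unitsEquivNeZero (G₀ := ZMod p)).symm, Nat.card_eq_fintype_card,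
      ZMod.card_units]
  -- injection from full cycles on X
  have hWle : Nat.card {g : G // (φ g).IsCycle ∧ (φ g).support = Finset.univ} ≤
      Nat.card {g : Zt // B g ≠ 0} := by
    apply Nat.card_le_card_of_injective
      (f := fun w => (⟨⟨w.1, hF1 w.1 w.2⟩, fun h0 => hB0 _ h0 w.2⟩ : {g : Zt // B g ≠ 0}))
    intro x y h
    apply Subtype.ext
    exact congrArg (fun t : {g : Zt // B g ≠ 0} => ((t : Zt) : G)) h
  -- final arithmetic
  have hGpos : (0 : ℚ) < Nat.card G := by exact_mod_cast Nat.card_pos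
  have hp0 : (p : ℚ) ≠ 0 := by
    have : (0 : ℚ) < p := by exact_mod_cast (by omega : 0 < p)
    exact ne_of_gt this
  have key : (Nat.card {g : G // (φ g).IsCycle ∧ (φ g).support = Finset.univ} : ℚ) ≤
      ((p : ℚ) - 1) * Nat.card {g : Zt // B g = 0} := by
    have h := hWle.trans_eq hne
    calc ((Nat.card {g : G // (φ g).IsCycle ∧ (φ g).support = Finset.univ}) : ℚ)
        ≤ (((p - 1) * Nat.card {g : Zt // B g = 0} : ℕ) : ℚ) := by exact_mod_cast h
      _ = ((p : ℚ) - 1) * Nat.card {g : Zt // B g = 0} := by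
          push_cast [Nat.cast_sub (show 1 ≤ p by omega)]
          ring
  rw [hcardZt]
  have hrhs : ((p : ℚ) - 1) / p * (((Nat.card {g : Zt // B g = 0} * p : ℕ) : ℚ) / Nat.card G) =
      (((p : ℚ) - 1) * Nat.card {g : Zt // B g = 0}) / Nat.card G := by
    push_cast
    field_simp
  rw [hrhs]
  gcongr
end

section
/- Let p_1, ..., p_r be odd primes with product n, let p be an odd prime and e ≥ 1 with p^e not dividing n. Then any element σ of the iterated wreath product AGL_1(p_r) ≀ ⋯ ≀ AGL_1(p_1) (acting imprimitively on n points), all of whose cycles have length 1 or q = p^e, has an even number of q-cycles. In particular, such a wreath product contains no element that is a product of an odd number of disjoint q-cycles (with all other points fixed). -/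
/-- Membership in the iterated imprimitive wreath product
`AGL₁(p (r-1)) ≀ ⋯ ≀ AGL₁(p 0)` acting on the `∏ i, p i` points
`(i : Fin r) → ZMod (p i)` (coordinate `0` indexing the coarsest blocks):
a permutation belongs to it iff each coordinate of the image depends only on the
earlier coordinates together with an affine (`x ↦ a*x + b`, `a` a unit) action on
the current coordinate. -/
def IsIterAffine {r : ℕ} (p : Fin r → ℕ) (σ : Equiv.Perm ((i : Fin r) → ZMod (p i))) : Prop :=
  ∀ (i : Fin r) (x : (j : Fin r) → ZMod (p j)), ∃ a b : ZMod (p i), IsUnit a ∧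
    ∀ y : (j : Fin r) → ZMod (p j), (∀ j : Fin r, j < i → y j = x j) →
      σ y i = a * y i + b

open Equiv Equiv.Perm Finset

/-- All cycles of `g` have length `pp ^ e` iff `g ^ pp ^ e = 1` and every point fixed by
`g ^ pp ^ (e-1)` is fixed by `g`. -/
lemma allq_iff {α : Type*} [Fintype α] [DecidableEq α] (g : Equiv.Perm α) (pp e : ℕ)
    (hpp : pp.Prime) (he : 1 ≤ e) :
    (∀ c ∈ g.cycleType, c = pp ^ e) ↔
      g ^ pp ^ e = 1 ∧ ∀ x, (g ^ pp ^ (e - 1)) x = x → g x = x := by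
  constructor
  · intro h
    constructor
    · rw [← orderOf_dvd_iff_pow_eq_one, ← Equiv.Perm.lcm_cycleType]
      exact Multiset.lcm_dvd.mpr fun c hc => (h c hc) ▸ dvd_rfl
    · intro x hx
      by_contra hgx
      have hc := Equiv.Perm.isCycle_cycleOf g hgx
      have hmem : (g.cycleOf x).support.card ∈ g.cycleType := by
        rw [Equiv.Perm.cycleType_def, Multiset.mem_map]
        exact ⟨g.cycleOf x,
          (Equiv.Perm.cycleOf_mem_cycleFactorsFinset_iff).mpr (Equiv.Perm.mem_support.mpr hgx),
          rfl⟩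
      have hcard := h _ hmem
      have hone : (g.cycleOf x) ^ pp ^ (e - 1) = 1 :=
        hc.pow_eq_one_iff.mpr ⟨x, by rwa [Equiv.Perm.cycleOf_apply_self],
          by rwa [Equiv.Perm.cycleOf_pow_apply_self]⟩
      have hdvd : pp ^ e ∣ pp ^ (e - 1) := by
        rw [← hcard, ← hc.orderOf]
        exact orderOf_dvd_of_pow_eq_one hone
      have := (Nat.pow_dvd_pow_iff_le_right hpp.one_lt).mp hdvd
      omega
  · rintro ⟨h1, h2⟩ c hc
    have hdvd : c ∣ pp ^ e :=
      (Equiv.Perm.dvd_of_mem_cycleType hc).trans (orderOf_dvd_of_pow_eq_one h1)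
    obtain ⟨k, hk, hck⟩ := (Nat.dvd_prime_pow hpp).mp hdvd
    by_cases hke : k = e
    · rw [hck, hke]
    exfalso
    have hcd : c ∣ pp ^ (e - 1) := hck ▸ pow_dvd_pow pp (by omega)
    rw [Equiv.Perm.cycleType_def, Multiset.mem_map] at hc
    obtain ⟨f, hf, hfc⟩ := hc
    rw [← Finset.mem_def] at hf
    obtain ⟨x, hfx, -⟩ := (Equiv.Perm.mem_cycleFactorsFinset_iff.mp hf).1
    have hxs : x ∈ f.support := Equiv.Perm.mem_support.mpr hfx
    have hgx : f x = g x := (Equiv.Perm.mem_cycleFactorsFinset_iff.mp hf).2 x hxs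
    have hfcx : f = g.cycleOf x := Equiv.Perm.cycle_is_cycleOf hxs hf
    have hfixed : (g ^ pp ^ (e - 1)) x = x := by
      rw [← Equiv.Perm.pow_mod_card_support_cycleOf_self_apply g (pp ^ (e - 1)) x, ← hfcx]
      have hmod : pp ^ (e - 1) % f.support.card = 0 := by
        rw [Function.comp_apply] at hfc
        rw [hfc]
        obtain ⟨t, ht⟩ := hcd
        rw [ht]
        exact Nat.mul_mod_right c t
      rw [hmod, pow_zero, Equiv.Perm.one_apply]
    have := h2 x hfixed
    rw [← hgx] at this
    exact hfx this


lemma cons_tail_of_zero_eq {n : ℕ} {α : Fin (n + 1) → Type*} {x0 : α 0}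
    (w : (i : Fin (n + 1)) → α i) (h : w 0 = x0) : Fin.cons x0 (Fin.tail w) = w := by
  rw [← h, Fin.cons_self_tail]

/-- The permutation induced on the block `{z // z 0 = x0}` of an invariant block,
transported to the product of the remaining coordinates. -/
def blockPerm {m : ℕ} (p : Fin (m + 1) → ℕ) (σ : Equiv.Perm ((i : Fin (m + 1)) → ZMod (p i)))
    (x0 : ZMod (p 0)) (h1 : ∀ z, z 0 = x0 → σ z 0 = x0) (h2 : ∀ z, z 0 = x0 → σ⁻¹ z 0 = x0) :
    Equiv.Perm ((i : Fin m) → ZMod (p i.succ)) where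
  toFun y := Fin.tail (σ (Fin.cons x0 y))
  invFun y := Fin.tail (σ⁻¹ (Fin.cons x0 y))
  left_inv y := by
    have hz : (σ (Fin.cons x0 y)) 0 = x0 := h1 _ (Fin.cons_zero _ _)
    have hw : Fin.cons x0 (Fin.tail (σ (Fin.cons x0 y))) = σ (Fin.cons x0 y) :=
      cons_tail_of_zero_eq _ hz
    simp only [hw, show σ⁻¹ (σ (Fin.cons x0 y)) = Fin.cons x0 y from σ.symm_apply_apply _, Fin.tail_cons]
  right_inv y := by
    have hz : (σ⁻¹ (Fin.cons x0 y)) 0 = x0 := h2 _ (Fin.cons_zero _ _)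
    have hw : Fin.cons x0 (Fin.tail (σ⁻¹ (Fin.cons x0 y))) = σ⁻¹ (Fin.cons x0 y) :=
      cons_tail_of_zero_eq _ hz
    simp only [hw, show σ (σ⁻¹ (Fin.cons x0 y)) = Fin.cons x0 y from σ.apply_symm_apply _, Fin.tail_cons]

lemma blockPerm_cons {m : ℕ} (p : Fin (m + 1) → ℕ) (σ : Equiv.Perm ((i : Fin (m + 1)) → ZMod (p i)))
    (x0 : ZMod (p 0)) (h1 : ∀ z, z 0 = x0 → σ z 0 = x0) (h2 : ∀ z, z 0 = x0 → σ⁻¹ z 0 = x0)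
    (y : (i : Fin m) → ZMod (p i.succ)) :
    σ (Fin.cons x0 y) = Fin.cons x0 (blockPerm p σ x0 h1 h2 y) := by
  have hz : (σ (Fin.cons x0 y)) 0 = x0 := h1 _ (Fin.cons_zero _ _)
  have : blockPerm p σ x0 h1 h2 y = Fin.tail (σ (Fin.cons x0 y)) := rfl
  rw [this, cons_tail_of_zero_eq _ hz]

lemma blockPerm_pow {m : ℕ} (p : Fin (m + 1) → ℕ) (σ : Equiv.Perm ((i : Fin (m + 1)) → ZMod (p i)))
    (x0 : ZMod (p 0)) (h1 : ∀ z, z 0 = x0 → σ z 0 = x0) (h2 : ∀ z, z 0 = x0 → σ⁻¹ z 0 = x0)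
    (k : ℕ) (y : (i : Fin m) → ZMod (p i.succ)) :
    (σ ^ k) (Fin.cons x0 y) = Fin.cons x0 ((blockPerm p σ x0 h1 h2 ^ k) y) := by
  induction k generalizing y with
  | zero => simp
  | succ k ih =>
    rw [pow_succ, Equiv.Perm.mul_apply, blockPerm_cons, ih, pow_succ, Equiv.Perm.mul_apply]

lemma odd_sum_of_odd {β : Type*} {s : Finset β} {f : β → ℕ} (hcard : Odd s.card)
    (hf : ∀ x ∈ s, Odd (f x)) : Odd (∑ x ∈ s, f x) := by
  rw [Nat.odd_iff, Finset.sum_nat_mod]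
  have h : ∑ x ∈ s, f x % 2 = ∑ _x ∈ s, 1 :=
    Finset.sum_congr rfl fun x hx => Nat.odd_iff.mp (hf x hx)
  rw [h, Finset.sum_const, smul_eq_mul, mul_one]
  have := Nat.odd_iff.mp hcard
  omega

lemma odd_card_fixed (r : ℕ) : ∀ (p : Fin r → ℕ) (_ : ∀ i, NeZero (p i)) [∀ i, NeZero (p i)],
    (∀ i, (p i).Prime ∧ Odd (p i)) → ∀ (pp e : ℕ), pp.Prime → 1 ≤ e →
    ¬ pp ^ e ∣ ∏ i, p i → ∀ σ : Equiv.Perm ((i : Fin r) → ZMod (p i)), IsIterAffine p σ →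
    σ ^ pp ^ e = 1 → (∀ x, (σ ^ pp ^ (e - 1)) x = x → σ x = x) →
    Odd (Fintype.card {x : (i : Fin r) → ZMod (p i) // σ x = x}) := by
  induction r with
  | zero =>
    intro p hpz _ hp pp e hpp he hnd σ hσ h1 h2
    have hcard : Fintype.card {x : (i : Fin 0) → ZMod (p i) // σ x = x} = 1 :=
      Fintype.card_eq_one_iff.mpr
        ⟨⟨fun i => i.elim0, Subsingleton.elim _ _⟩, fun y => Subtype.ext (Subsingleton.elim _ _)⟩
    rw [hcard]
    exact odd_one
  | succ m ih =>
    intro p hpz _ hp pp e hpp he hnd σ hσ h1 h2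
    haveI : Fact (p 0).Prime := ⟨(hp 0).1⟩
    obtain ⟨a, b, ha, hab⟩ := hσ 0 (fun _ => 0)
    have hab' : ∀ z, σ z 0 = a * z 0 + b := fun z =>
      hab z (fun j hj => absurd hj (by simp [Fin.lt_def]))
    -- the fixed points of the affine map on the first coordinate
    set F : Finset (ZMod (p 0)) := Finset.univ.filter (fun x0 => a * x0 + b = x0) with hFdef
    -- fixed points of σ lie over F, and blocks over F are invariant
    have hmemF : ∀ x0 : ZMod (p 0), x0 ∈ F ↔ a * x0 + b = x0 := by
      intro x0; simp [hFdef]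
    -- Case: F is empty (a = 1, b ≠ 0): contradiction with pp^e ∤ n
    by_cases hFne : ∃ x0, x0 ∈ F
    swap
    · exfalso
      push_neg at hFne
      have hmoved : ∀ z : (i : Fin (m + 1)) → ZMod (p i), σ z ≠ z := by
        intro z hz
        refine hFne (z 0) ((hmemF _).mpr ?_)
        have := hab' z
        rw [hz] at this
        exact this.symm
      have hsupp : σ.support = Finset.univ := by
        ext z; simpa [Equiv.Perm.mem_support] using hmoved z
      have hall : ∀ c ∈ σ.cycleType, c = pp ^ e := (allq_iff σ pp e hpp he).mpr ⟨h1, h2⟩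
      have hrep : σ.cycleType = Multiset.replicate (Multiset.card σ.cycleType) (pp ^ e) :=
        Multiset.eq_replicate_card.mpr hall
      have hdvd : pp ^ e ∣ Fintype.card ((i : Fin (m + 1)) → ZMod (p i)) := by
        rw [← Finset.card_univ, ← hsupp, ← Equiv.Perm.sum_cycleType]
        conv_rhs => rw [hrep]
        rw [Multiset.sum_replicate, smul_eq_mul]
        exact dvd_mul_left _ _
      have hcardpi : Fintype.card ((i : Fin (m + 1)) → ZMod (p i)) = ∏ i, p i := by
        simp [ZMod.card]
      exact hnd (hcardpi ▸ hdvd)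
    -- Main case: F nonempty; it has odd cardinality
    have hFodd : Odd F.card := by
      rcases eq_or_ne a 1 with ha1 | ha1
      · -- a = 1; then b = 0 (since F is nonempty) and F = univ
        obtain ⟨x0, hx0⟩ := hFne
        have hb0 : b = 0 := by
          have := (hmemF x0).mp hx0
          rw [ha1, one_mul] at this
          exact add_eq_left.mp this
        have hFuniv : F = Finset.univ := by
          ext x0
          simp [hFdef, ha1, hb0]
        rw [hFuniv, Finset.card_univ, ZMod.card]
        exact (hp 0).2
      · -- a ≠ 1: F = {(1 - a)⁻¹ * b}
        have hne : (1 : ZMod (p 0)) - a ≠ 0 := sub_ne_zero.mpr (Ne.symm ha1)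
        have key : ∀ x0 : ZMod (p 0), (a * x0 + b = x0) ↔ x0 = (1 - a)⁻¹ * b := by
          intro x0
          constructor
          · intro h
            have hb : (1 - a) * x0 = b := by linear_combination -h
            rw [← hb, ← mul_assoc, inv_mul_cancel₀ hne, one_mul]
          · rintro rfl
            have hc : (1 - a) * ((1 - a)⁻¹ * b) = b := by
              rw [← mul_assoc, mul_inv_cancel₀ hne, one_mul]
            calc a * ((1 - a)⁻¹ * b) + b
                = a * ((1 - a)⁻¹ * b) + (1 - a) * ((1 - a)⁻¹ * b) := by rw [hc]
              _ = (1 - a)⁻¹ * b := by ring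
        have : F = Finset.univ.filter (fun x0 => x0 = (1 - a)⁻¹ * b) := by
          ext x0; simp [hFdef, key x0]
        rw [this, Finset.filter_eq', if_pos (Finset.mem_univ _), Finset.card_singleton]
        exact odd_one
    -- blocks over F are invariant under σ and σ⁻¹
    have hb1 : ∀ x0 ∈ F, ∀ z : (i : Fin (m + 1)) → ZMod (p i), z 0 = x0 → σ z 0 = x0 := by
      intro x0 hx0 z hz
      rw [hab' z, hz]
      exact (hmemF x0).mp hx0
    have hb2 : ∀ x0 ∈ F, ∀ z : (i : Fin (m + 1)) → ZMod (p i), z 0 = x0 → σ⁻¹ z 0 = x0 := by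
      intro x0 hx0 z hz
      have h := hab' (σ⁻¹ z)
      rw [show σ (σ⁻¹ z) = z from σ.apply_symm_apply z] at h
      have hcan : a * (σ⁻¹ z 0) + b = a * x0 + b := by
        rw [← h, hz]
        exact ((hmemF x0).mp hx0).symm
      exact ha.mul_left_cancel (add_right_cancel hcan)
    -- each block over F contributes an odd number of fixed points (induction hypothesis)
    have hblockodd : ∀ x0 ∈ F,
        Odd (Fintype.card {y : (i : Fin m) → ZMod (p i.succ) //
          σ (Fin.cons x0 y) = Fin.cons x0 y}) := by
      intro x0 hx0
      set τ := blockPerm p σ x0 (hb1 x0 hx0) (hb2 x0 hx0) with hτ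
      have hτaff : IsIterAffine (fun i : Fin m => p i.succ) τ := by
        intro i x'
        obtain ⟨a', b', ha', hP⟩ := hσ i.succ (Fin.cons x0 x')
        refine ⟨a', b', ha', ?_⟩
        intro y' hy'
        have hcons : ∀ j : Fin (m + 1), j < i.succ →
            Fin.cons (α := fun j => ZMod (p j)) x0 y' j =
              Fin.cons (α := fun j => ZMod (p j)) x0 x' j := by
          intro j hj
          rcases Fin.eq_zero_or_eq_succ j with rfl | ⟨j', rfl⟩
          · simp
          · simp only [Fin.cons_succ]
            exact hy' j' (by rwa [Fin.succ_lt_succ_iff] at hj)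
        have hs := hP (Fin.cons x0 y') hcons
        have hre : τ y' i = σ (Fin.cons x0 y') i.succ := rfl
        rw [hre, hs, Fin.cons_succ]
      have h1τ : τ ^ pp ^ e = 1 := by
        apply Equiv.ext
        intro y
        have hk := blockPerm_pow p σ x0 (hb1 x0 hx0) (hb2 x0 hx0) (pp ^ e) y
        rw [h1] at hk
        simp only [Equiv.Perm.one_apply] at hk ⊢
        have := congrArg Fin.tail hk
        rw [Fin.tail_cons, Fin.tail_cons] at this
        exact this.symm
      have h2τ : ∀ y, (τ ^ pp ^ (e - 1)) y = y → τ y = y := by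
        intro y hy
        have hk := blockPerm_pow p σ x0 (hb1 x0 hx0) (hb2 x0 hx0) (pp ^ (e - 1)) y
        rw [hy] at hk
        have hfix := h2 _ hk
        have hcons := blockPerm_cons p σ x0 (hb1 x0 hx0) (hb2 x0 hx0) y
        rw [hfix] at hcons
        have := congrArg Fin.tail hcons
        rw [Fin.tail_cons, Fin.tail_cons] at this
        exact this.symm
      have hnd' : ¬ pp ^ e ∣ ∏ i : Fin m, p i.succ := by
        intro hd
        exact hnd (by rw [Fin.prod_univ_succ]; exact hd.mul_left (p 0))
      have hodd := ih (fun i => p i.succ) (fun i => hpz i.succ) (fun i => hp i.succ)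
        pp e hpp he hnd' τ hτaff h1τ h2τ
      have hcc : Fintype.card {y : (i : Fin m) → ZMod (p i.succ) // τ y = y} =
          Fintype.card {y : (i : Fin m) → ZMod (p i.succ) //
            σ (Fin.cons x0 y) = Fin.cons x0 y} := by
        apply Fintype.card_congr
        apply Equiv.subtypeEquivRight
        intro y
        constructor
        · intro h
          rw [blockPerm_cons p σ x0 (hb1 x0 hx0) (hb2 x0 hx0) y, ← hτ, h]
        · intro h
          have hre : τ y = Fin.tail (σ (Fin.cons x0 y)) := rfl
          rw [hre, h, Fin.tail_cons]
      rwa [hcc] at hodd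
    -- count the fixed points of σ fiberwise over the first coordinate
    classical
    have hfc : Fintype.card {x : (i : Fin (m + 1)) → ZMod (p i) // σ x = x} =
        (Finset.univ.filter (fun z : (i : Fin (m + 1)) → ZMod (p i) => σ z = z)).card :=
      Fintype.card_subtype _
    have hfib : (Finset.univ.filter (fun z : (i : Fin (m + 1)) → ZMod (p i) => σ z = z)).card =
        ∑ x0 ∈ (Finset.univ : Finset (ZMod (p 0))),
          ((Finset.univ.filter (fun z : (i : Fin (m + 1)) → ZMod (p i) => σ z = z)).filter
            (fun z => z 0 = x0)).card :=
      Finset.card_eq_sum_card_fiberwise (fun z _ => Finset.mem_univ _)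
    have hzero : ∀ x0 ∉ F,
        ((Finset.univ.filter (fun z : (i : Fin (m + 1)) → ZMod (p i) => σ z = z)).filter
          (fun z => z 0 = x0)).card = 0 := by
      intro x0 hx0
      rw [Finset.card_eq_zero, Finset.filter_eq_empty_iff]
      intro z hz hz0
      apply hx0
      rw [Finset.mem_filter] at hz
      refine (hmemF x0).mpr ?_
      rw [← hz0, ← hab' z, hz.2]
    have hsum : (Finset.univ.filter (fun z : (i : Fin (m + 1)) → ZMod (p i) => σ z = z)).card =
        ∑ x0 ∈ F,
          ((Finset.univ.filter (fun z : (i : Fin (m + 1)) → ZMod (p i) => σ z = z)).filter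
            (fun z => z 0 = x0)).card := by
      rw [hfib, ← Finset.sum_subset (Finset.subset_univ F) (fun x0 _ hx0 => hzero x0 hx0)]
    have hfibcard : ∀ x0 ∈ F,
        ((Finset.univ.filter (fun z : (i : Fin (m + 1)) → ZMod (p i) => σ z = z)).filter
          (fun z => z 0 = x0)).card
        = Fintype.card {y : (i : Fin m) → ZMod (p i.succ) //
            σ (Fin.cons x0 y) = Fin.cons x0 y} := by
      intro x0 _
      rw [Fintype.card_subtype]
      apply Finset.card_bij' (i := fun z _ => Fin.tail z) (j := fun y _ => Fin.cons x0 y)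
      case hi =>
        intro z hz
        simp only [Finset.mem_filter, Finset.mem_univ, true_and] at hz ⊢
        rw [cons_tail_of_zero_eq z hz.2]
        exact hz.1
      case hj =>
        intro y hy
        simp only [Finset.mem_filter, Finset.mem_univ, true_and, Fin.cons_zero,
          and_true] at hy ⊢
        exact hy
      case left_inv =>
        intro z hz
        simp only [Finset.mem_filter, Finset.mem_univ, true_and] at hz
        exact cons_tail_of_zero_eq z hz.2
      case right_inv =>
        intro y _
        exact Fin.tail_cons _ _
    rw [hfc, hsum]
    apply odd_sum_of_odd hFodd
    intro x0 hx0
    rw [hfibcard x0 hx0]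
    exact hblockodd x0 hx0

/-- Let `p 0, …, p (r-1)` be odd primes, let `pp` be an odd prime and
`e ≥ 1` with `pp^e` not dividing `n = ∏ i, p i`. Then any element `σ` of the iterated
wreath product `AGL₁(p (r-1)) ≀ ⋯ ≀ AGL₁(p 0)` (acting imprimitively on `n` points),
all of whose cycles have length `1` or `q = pp^e`, has an even number of `q`-cycles;
in particular, the wreath product contains no element that is a product of an odd
number of disjoint `q`-cycles (all other points being fixed). -/
theorem iterated_affine_wreath_even_q_cycles {r : ℕ} (p : Fin r → ℕ)
    [∀ i, NeZero (p i)] (hp : ∀ i, (p i).Prime ∧ Odd (p i))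
    (pp e : ℕ) (hpp : pp.Prime) (hppodd : Odd pp) (he : 1 ≤ e)
    (hnd : ¬ pp ^ e ∣ ∏ i, p i)
    (σ : Equiv.Perm ((i : Fin r) → ZMod (p i))) (hσ : IsIterAffine p σ)
    (hcyc : ∀ c ∈ σ.cycleType, c = pp ^ e) :
    Even (Multiset.card σ.cycleType) := by
  classical
  obtain ⟨h1, h2⟩ := (allq_iff σ pp e hpp he).mp hcyc
  have hfix : Odd (Fintype.card {x : (i : Fin r) → ZMod (p i) // σ x = x}) :=
    odd_card_fixed r p (fun i => inferInstance) hp pp e hpp he hnd σ hσ h1 h2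
  -- the total count
  have hn : Fintype.card ((i : Fin r) → ZMod (p i)) = ∏ i, p i := by
    simp [ZMod.card]
  have hrep : σ.cycleType = Multiset.replicate (Multiset.card σ.cycleType) (pp ^ e) :=
    Multiset.eq_replicate_card.mpr hcyc
  have hsum : σ.support.card = Multiset.card σ.cycleType * pp ^ e := by
    rw [← Equiv.Perm.sum_cycleType]
    conv_lhs => rw [hrep]
    rw [Multiset.sum_replicate, smul_eq_mul]
  have hsplit : σ.support.card + Fintype.card {x : (i : Fin r) → ZMod (p i) // σ x = x}
      = ∏ i, p i := by
    have hsupp : σ.support = Finset.univ.filter (fun x => ¬ σ x = x) := rfl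
    rw [← hn, Fintype.card_subtype, ← Finset.card_univ, hsupp, add_comm]
    exact Finset.card_filter_add_card_filter_not _
  have hnodd : Odd (∏ i, p i) :=
    Finset.prod_induction p Odd (fun _ _ ha hb => ha.mul hb) odd_one (fun i _ => (hp i).2)
  rcases Nat.even_or_odd (Multiset.card σ.cycleType) with hk | hk
  · exact hk
  exfalso
  have hqodd : Odd (pp ^ e) := hppodd.pow
  have heven : Even (σ.support.card
      + Fintype.card {x : (i : Fin r) → ZMod (p i) // σ x = x}) := by
    rw [hsum]
    exact (hk.mul hqodd).add_odd hfix
  rw [hsplit] at heven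
  exact (Nat.not_odd_iff_even.mpr heven) hnodd
end

section
/- Let k < m be two prime numbers with k ≤ m - 2, and let H ≤ S_n be a transitive subgroup of the iterated wreath product AGL_1(p_r) ≀ ⋯ ≀ AGL_1(p_1), where p_1⋯p_r = n and km divides n. Then H cannot contain both a k-cycle (fixing all other points) and an m-cycle (fixing all other points). -/
lemma prime_cycle_aux {r : ℕ} (p : Fin r → ℕ) [∀ i, NeZero (p i)]
    (hp : ∀ i, (p i).Prime) (q : ℕ) (hq : q.Prime) (hr : 0 < r)
    (σ : Equiv.Perm ((i : Fin r) → ZMod (p i)))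
    (hσ : IsIterAffine p σ) (hc : σ.IsCycle) (hcard : σ.support.card = q) :
    q = p ⟨r - 1, Nat.sub_lt hr one_pos⟩ ∨ q + 1 = p ⟨r - 1, Nat.sub_lt hr one_pos⟩ := by
  classical
  set L : Fin r := ⟨r - 1, Nat.sub_lt hr one_pos⟩ with hL
  have horder : orderOf σ = q := by rw [hc.orderOf, hcard]
  have hσq : σ ^ q = 1 := by rw [← horder]; exact pow_orderOf_eq_one σ
  obtain ⟨x₀, hx₀, hcyc⟩ := id hc
  have hx₀mem : x₀ ∈ σ.support := Equiv.Perm.mem_support.mpr hx₀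
  choose a b hab using fun i => hσ i x₀
  have hu : ∀ i, IsUnit (a i) := fun i => (hab i).1
  set g : ∀ i : Fin r, ZMod (p i) → ZMod (p i) := fun i t => a i * t + b i with hg
  have hB : ∀ (i : Fin r) (y), (∀ j, j < i → y j = x₀ j) → σ y i = g i (y i) :=
    fun i y hy => (hab i).2 y hy
  have hmovedex : ∃ i : Fin r, ∃ t, g i t ≠ t := by
    have h1 : ∃ i, σ x₀ i ≠ x₀ i := by
      by_contra h; push_neg at h; exact hx₀ (funext h)
    obtain ⟨i, hi⟩ := h1
    exact ⟨i, x₀ i, by rw [← hB i x₀ (fun j _ => rfl)]; exact hi⟩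
  set Mov : Finset (Fin r) := Finset.univ.filter (fun i => ∃ t, g i t ≠ t) with hMovdef
  have hMovne : Mov.Nonempty := by
    obtain ⟨i, hi⟩ := hmovedex
    exact ⟨i, Finset.mem_filter.mpr ⟨Finset.mem_univ _, hi⟩⟩
  set i : Fin r := Mov.min' hMovne with hidef
  have hi_moved : ∃ t, g i t ≠ t := (Finset.mem_filter.mp (Mov.min'_mem hMovne)).2
  have hi_min : ∀ j, j < i → ∀ t, g j t = t := by
    intro j hj t
    by_contra ht
    exact absurd (Mov.min'_le j (Finset.mem_filter.mpr ⟨Finset.mem_univ _, ⟨t, ht⟩⟩))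
      (not_le.mpr hj)
  -- all support points agree with x₀ below i
  have hPnat : ∀ v : ℕ, ∀ j : Fin r, j.val = v → j < i → ∀ y ∈ σ.support, y j = x₀ j := by
    intro v
    induction v using Nat.strong_induction_on with
    | _ v IH =>
      rintro j rfl hji y hy
      have hprefix : ∀ z ∈ σ.support, ∀ j' : Fin r, j' < j → z j' = x₀ j' := by
        intro z hz j' hj'
        exact IH j'.val hj' j' rfl (lt_trans hj' hji) z hz
      have hfix : ∀ z ∈ σ.support, σ z j = z j := by
        intro z hz
        rw [hB j z (hprefix z hz), hi_min j hji]
      have hl : ∀ l : ℕ, (σ ^ l) x₀ j = x₀ j := by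
        intro l
        induction l with
        | zero => simp
        | succ l IHl =>
          rw [pow_succ', Equiv.Perm.mul_apply,
            hfix _ (Equiv.Perm.pow_apply_mem_support.mpr hx₀mem), IHl]
      obtain ⟨l, rfl⟩ := hc.exists_pow_eq hx₀ (Equiv.Perm.mem_support.mp hy)
      exact hl l
  have hP : ∀ j : Fin r, j < i → ∀ y ∈ σ.support, y j = x₀ j :=
    fun j => hPnat j.val j rfl
  have hrep : ∀ y ∈ σ.support, ∃ l : ℕ, (σ ^ l) x₀ = y :=
    fun y hy => hc.exists_pow_eq hx₀ (Equiv.Perm.mem_support.mp hy)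
  -- iteration tracking at level i
  have hIter : ∀ l : ℕ, ∀ y, (∀ j, j < i → y j = x₀ j) →
      (∀ j, j < i → (σ ^ l) y j = x₀ j) ∧ (σ ^ l) y i = (g i)^[l] (y i) := by
    intro l
    induction l with
    | zero => intro y hy; simpa using hy
    | succ l IH =>
      intro y hy
      obtain ⟨h1, h2⟩ := IH y hy
      have hz : ∀ j, j < i → σ ((σ ^ l) y) j = x₀ j := by
        intro j hj
        by_cases hs : (σ ^ l) y ∈ σ.support
        · exact hP j hj _ (Equiv.Perm.apply_mem_support.mpr hs)
        · rw [Equiv.Perm.notMem_support.mp hs]; exact h1 j hj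
      have hz2 : σ ((σ ^ l) y) i = g i ((σ ^ l) y i) := hB i _ h1
      refine ⟨?_, ?_⟩
      · intro j hj; rw [pow_succ', Equiv.Perm.mul_apply]; exact hz j hj
      · rw [pow_succ', Equiv.Perm.mul_apply, hz2, h2, ← Function.iterate_succ_apply' (g i)]
  have hiter_x0 : ∀ l : ℕ, (σ ^ l) x₀ i = (g i)^[l] (x₀ i) :=
    fun l => (hIter l x₀ (fun _ _ => rfl)).2
  have hupd_pre : ∀ t : ZMod (p i), ∀ j, j < i → Function.update x₀ i t j = x₀ j :=
    fun t j hj => Function.update_of_ne (ne_of_lt hj) _ _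
  -- g i has order dividing q
  have hgq : ∀ t, (g i)^[q] t = t := by
    intro t
    have h2 := (hIter q _ (hupd_pre t)).2
    rw [hσq] at h2
    simpa using h2.symm
  have hginj : Function.Injective (g i) := by
    intro s t hst
    simp only [hg] at hst
    exact (hu i).mul_left_cancel (add_right_cancel hst)
  have hupd_mem : ∀ t, g i t ≠ t → Function.update x₀ i t ∈ σ.support := by
    intro t ht
    rw [Equiv.Perm.mem_support]
    intro hfix
    apply ht
    have h1 : σ (Function.update x₀ i t) i = g i t := by
      rw [hB i _ (hupd_pre t), Function.update_self]
    rw [hfix, Function.update_self] at h1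
    exact h1.symm
  obtain ⟨tm, htm⟩ := hi_moved
  -- minimal period of x₀ i under g i is q
  have hper : Function.IsPeriodicPt (g i) q (x₀ i) := hgq (x₀ i)
  have hmpdvd : Function.minimalPeriod (g i) (x₀ i) ∣ q := hper.minimalPeriod_dvd
  have hmpq : Function.minimalPeriod (g i) (x₀ i) = q := by
    rcases (Nat.Prime.eq_one_or_self_of_dvd hq _ hmpdvd) with h1 | h1
    · exfalso
      have hfix0 : Function.IsFixedPt (g i) (x₀ i) :=
        Function.minimalPeriod_eq_one_iff_isFixedPt.mp h1
      obtain ⟨l, hl⟩ := hrep _ (hupd_mem tm htm)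
      have h2 : (σ ^ l) x₀ i = (g i)^[l] (x₀ i) := hiter_x0 l
      rw [hl, Function.update_self] at h2
      rw [hfix0.iterate l] at h2
      exact htm (h2 ▸ hfix0)
    · exact h1
  -- injectivity of coordinate i on the support
  have hmain : ∀ l l' : ℕ, l' ≤ l → (σ ^ l) x₀ i = (σ ^ l') x₀ i → (σ ^ l) x₀ = (σ ^ l') x₀ := by
    intro l l' hle heq
    rw [hiter_x0, hiter_x0] at heq
    have h2 : (g i)^[l'] ((g i)^[l - l'] (x₀ i)) = (g i)^[l'] (x₀ i) := by
      rw [← Function.iterate_add_apply, (by omega : l' + (l - l') = l)]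
      exact heq
    have h3 : (g i)^[l - l'] (x₀ i) = x₀ i := (hginj.iterate l') h2
    have h4 : Function.IsPeriodicPt (g i) (l - l') (x₀ i) := h3
    have h5 : q ∣ l - l' := hmpq ▸ h4.minimalPeriod_dvd
    have h6 : σ ^ (l - l') = 1 := orderOf_dvd_iff_pow_eq_one.mp (by rw [horder]; exact h5)
    calc (σ ^ l) x₀ = (σ ^ (l - l') * σ ^ l') x₀ := by
            rw [← pow_add, (by omega : l - l' + l' = l)]
      _ = (σ ^ l') x₀ := by rw [h6, one_mul]
  have hinj : ∀ y ∈ σ.support, ∀ y' ∈ σ.support, y i = y' i → y = y' := by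
    intro y hy y' hy' hii
    obtain ⟨l, rfl⟩ := hrep y hy
    obtain ⟨l', rfl⟩ := hrep y' hy'
    rcases le_total l' l with h | h
    · exact hmain l l' h hii
    · exact (hmain l' l h hii.symm).symm
  -- i is the last coordinate
  have hilast : i = L := by
    by_contra hne
    have hlt : i < L := by
      rw [Fin.lt_def]
      have h1 : i.val < r := i.isLt
      have h2 : i.val ≠ r - 1 := fun h => hne (Fin.ext h)
      simp only [hL]
      omega
    haveI : Fact (1 < p L) := ⟨(hp L).one_lt⟩
    set y := Function.update x₀ i tm with hy
    have hymem : y ∈ σ.support := hupd_mem tm htm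
    set y' := Function.update y L (y L + 1) with hy'
    have hy'pre : ∀ j, j < i → y' j = x₀ j := by
      intro j hj
      rw [hy', Function.update_of_ne (ne_of_lt (lt_trans hj hlt)) _ _]
      exact hupd_pre tm j hj
    have hy'i : y' i = tm := by
      rw [hy', Function.update_of_ne (ne_of_lt hlt) _ _, hy, Function.update_self]
    have hy'mem : y' ∈ σ.support := by
      rw [Equiv.Perm.mem_support]
      intro hfix
      apply htm
      have h1 : σ y' i = g i tm := by rw [hB i _ hy'pre, hy'i]
      rw [hfix, hy'i] at h1
      exact h1.symm
    have heq : y = y' := by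
      apply hinj y hymem y' hy'mem
      rw [hy'i, hy, Function.update_self]
    have h2 : y L = y' L := congrFun heq L
    rw [hy', Function.update_self] at h2
    exact one_ne_zero (by linear_combination -h2)
  -- counting
  have himage : σ.support.image (fun y => y i) = Finset.univ.filter (fun t => g i t ≠ t) := by
    ext t
    simp only [Finset.mem_image, Finset.mem_filter, Finset.mem_univ, true_and]
    constructor
    · rintro ⟨y, hy, rfl⟩
      intro hfix
      have hyB : ∀ j, j < i → y j = x₀ j := fun j hj => hP j hj y hy
      have h1 : σ y i = y i := by rw [hB i y hyB, hfix]
      have h2 : σ y = y := hinj (σ y) (Equiv.Perm.apply_mem_support.mpr hy) y hy h1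
      exact Equiv.Perm.mem_support.mp hy h2
    · intro ht
      exact ⟨_, hupd_mem t ht, Function.update_self _ _ _⟩
  have hcard2 : (Finset.univ.filter (fun t => g i t ≠ t)).card = q := by
    rw [← himage, Finset.card_image_of_injOn, hcard]
    intro y hy y' hy' h
    exact hinj y (by simpa using hy) y' (by simpa using hy') h
  -- affine fixed point count
  haveI : Fact (p i).Prime := ⟨hp i⟩
  have hcardF : Fintype.card (ZMod (p i)) = p i := ZMod.card (p i)
  have hsplit := Finset.card_filter_add_card_filter_not
    (s := (Finset.univ : Finset (ZMod (p i)))) (p := fun t => g i t = t)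
  have hconc : q = p i ∨ q + 1 = p i := by
    by_cases ha : a i = 1
    · left
      have hall : Finset.univ.filter (fun t => g i t ≠ t) = Finset.univ := by
        ext t
        simp only [Finset.mem_filter, Finset.mem_univ, true_and, iff_true]
        intro hfix
        apply htm
        have hb : b i = 0 := by
          have : (1 : ZMod (p i)) * t + b i = t := by rw [← ha]; exact hfix
          linear_combination this
        simp only [hg, ha, hb, one_mul, add_zero]
      rw [hall, Finset.card_univ, hcardF] at hcard2
      exact hcard2.symm
    · right
      have h1a : (1 : ZMod (p i)) - a i ≠ 0 := sub_ne_zero.mpr (fun h => ha h.symm)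
      have hfixset : Finset.univ.filter (fun t => g i t = t) = {(1 - a i)⁻¹ * b i} := by
        ext t
        simp only [Finset.mem_filter, Finset.mem_univ, true_and, Finset.mem_singleton]
        rw [eq_comm (a := t), inv_mul_eq_iff_eq_mul₀ h1a]
        constructor
        · intro h; simp only [hg] at h; linear_combination h
        · intro h; simp only [hg]; linear_combination h
      rw [hfixset, Finset.card_singleton] at hsplit
      have : (Finset.univ.filter (fun t => ¬ g i t = t)).card =
          (Finset.univ.filter (fun t => g i t ≠ t)).card := rfl
      rw [this, hcard2, Finset.card_univ, hcardF] at hsplit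
      omega
  rw [hilast] at hconc
  exact hconc

/-- Let `k < m` be primes with `k ≤ m - 2`, and let `H` be a transitive
subgroup of the iterated wreath product `AGL₁(p (r-1)) ≀ ⋯ ≀ AGL₁(p 0)` acting on
`n = ∏ i, p i` points, where `k*m ∣ n`. Then `H` cannot contain both a `k`-cycle
(fixing all other points) and an `m`-cycle (fixing all other points). -/
theorem no_k_cycle_and_m_cycle_in_iterated_affine_wreath {r : ℕ} (p : Fin r → ℕ)
    [∀ i, NeZero (p i)] (hp : ∀ i, (p i).Prime)
    (k m : ℕ) (hk : k.Prime) (hm : m.Prime) (hkm : k < m) (hk2 : k ≤ m - 2)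
    (hdvd : k * m ∣ ∏ i, p i)
    (H : Subgroup (Equiv.Perm ((i : Fin r) → ZMod (p i))))
    (hHwr : ∀ σ ∈ H, IsIterAffine p σ)
    (htrans : ∀ x y : (i : Fin r) → ZMod (p i), ∃ g ∈ H, g x = y) :
    ¬ ((∃ σ ∈ H, σ.IsCycle ∧ σ.support.card = k) ∧
       (∃ τ ∈ H, τ.IsCycle ∧ τ.support.card = m)) := by
  rintro ⟨⟨σ, hσH, hσc, hσcard⟩, ⟨τ, hτH, hτc, hτcard⟩⟩
  have hr : 0 < r := by
    rcases Nat.eq_zero_or_pos r with rfl | hr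
    · rw [Finset.univ_eq_empty, Finset.prod_empty] at hdvd
      have := Nat.le_of_dvd one_pos hdvd
      have := hk.two_le
      have := hm.two_le
      nlinarith
    · exact hr
  have h1 := prime_cycle_aux p hp k hk hr σ (hHwr σ hσH) hσc hσcard
  have h2 := prime_cycle_aux p hp m hm hr τ (hHwr τ hτH) hτc hτcard
  have := hk.two_le
  have := hm.two_le
  omega
end

section
/- Let f(X) = uX^d + v ∈ K[X] with u ≠ 0, over a number field K, and let p be a prime of O_K such that f(X) - a is irreducible mod p for some a ∈ O_K and such that the reduction is well-defined of degree d. Then N(p) ≡ 1 (mod q) for every prime q dividing d, and N(p) ≡ 1 (mod 4) if 4 divides d. -/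
open Polynomial NumberField

private lemma aux_pow_surj {E : Type*} [Field E] [Finite E] {n : ℕ} (hn : 0 < n)
    (h : (Nat.card Eˣ).Coprime n) (x : E) : ∃ b : E, b ^ n = x := by
  rcases eq_or_ne x 0 with rfl | hx
  · exact ⟨0, zero_pow hn.ne'⟩
  · refine ⟨((powCoprime h).symm (Units.mk0 x hx) : Eˣ), ?_⟩
    have h1 : powCoprime h ((powCoprime h).symm (Units.mk0 x hx)) = Units.mk0 x hx :=
      (powCoprime h).apply_symm_apply _
    rw [powCoprime_apply] at h1
    simpa using congrArg Units.val h1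

private lemma aux_not_isUnit {E : Type*} [Field E] {A : Polynomial E} {k : ℕ}
    (hk : k ≠ 0) (h : A.coeff k ≠ 0) : ¬ IsUnit A := by
  intro hA
  exact h (Polynomial.coeff_eq_zero_of_natDegree_lt
    (by rw [Polynomial.natDegree_eq_zero_of_isUnit hA]; omega))

set_option maxHeartbeats 1000000 in
set_option synthInstance.maxHeartbeats 400000 in
/-- Let `f(X) = uX^d + v` over a number field `K` (with `u, v`
integral, `u ≠ 0`), let `p` be a prime of `O_K` and `a ∈ O_K` such that the
reduction of `f(X) - a` mod `p` is well-defined of degree `d` (i.e. `u ∉ p`) and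
irreducible. Then `N(p) ≡ 1 (mod q)` for every prime `q` dividing `d`, and
`N(p) ≡ 1 (mod 4)` if `4` divides `d`. -/
theorem norm_congruences_of_binomial_irreducible_mod_p
    {K : Type*} [Field K] [NumberField K]
    (u v a : 𝓞 K) (hu : u ≠ 0) (d : ℕ) (hd : 1 ≤ d)
    (p : Ideal (𝓞 K)) [p.IsMaximal]
    (hdeg : Ideal.Quotient.mk p u ≠ 0)
    (hirr : Irreducible
      (C (Ideal.Quotient.mk p u) * X ^ d + C (Ideal.Quotient.mk p (v - a)) :
        Polynomial ((𝓞 K) ⧸ p))) :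
    (∀ q : ℕ, q.Prime → q ∣ d →
        ((Ideal.absNorm p : ZMod q) = 1)) ∧
      (4 ∣ d → ((Ideal.absNorm p : ZMod 4) = 1)) := by
  classical
  letI : Field ((𝓞 K) ⧸ p) := Ideal.Quotient.field p
  have hpbot : p ≠ ⊥ :=
    Ring.ne_bot_of_isMaximal_of_not_isField ‹p.IsMaximal› (RingOfIntegers.not_isField K)
  have hNnz : Ideal.absNorm p ≠ 0 := by
    simpa [Ideal.absNorm_eq_zero_iff] using hpbot
  have hfin : Finite ((𝓞 K) ⧸ p) := (Ideal.absNorm_ne_zero_iff p).mp hNnz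
  letI : Fintype ((𝓞 K) ⧸ p) := Fintype.ofFinite _
  set N := Ideal.absNorm p with hN
  have hNcard : N = Fintype.card ((𝓞 K) ⧸ p) := by
    rw [hN, Ideal.absNorm_apply, Submodule.cardQuot_apply, Nat.card_eq_fintype_card]
  have hN2 : 2 ≤ N := by rw [hNcard]; exact Fintype.one_lt_card
  set ub := Ideal.Quotient.mk p u with hub
  set cb := Ideal.Quotient.mk p (v - a) with hcb
  set α : (𝓞 K) ⧸ p := -(cb * ub⁻¹) with hαdef
  have hd0 : d ≠ 0 := by omega
  have hua : ub * α = -cb := by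
    rw [hαdef, mul_neg, mul_comm cb, ← mul_assoc, mul_inv_cancel₀ hdeg, one_mul]
  have heq : (C ub * X ^ d + C cb : ((𝓞 K) ⧸ p)[X]) = C ub * (X ^ d - C α) := by
    rw [mul_sub, ← C_mul, hua, map_neg, sub_neg_eq_add]
  have hα : Irreducible (X ^ d - C α : ((𝓞 K) ⧸ p)[X]) := by
    have h' := hirr
    rw [heq] at h'
    exact (irreducible_isUnit_mul (isUnit_C.mpr hdeg.isUnit)).mp h'
  -- Key: α is not a q-th power for 2 ≤ q ∣ d
  have hnotpow : ∀ q : ℕ, 2 ≤ q → q ∣ d → ∀ b : (𝓞 K) ⧸ p, b ^ q ≠ α := by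
    intro q hq hqd b hb
    obtain ⟨m, hm⟩ := hqd
    have hm1 : 1 ≤ m := by
      rcases Nat.eq_zero_or_pos m with h | h
      · subst h; simp at hm; omega
      · exact h
    have hmd : m < d := by
      have : 2 * m ≤ q * m := Nat.mul_le_mul_right m hq
      omega
    have hdvd : (X ^ m - C b : ((𝓞 K) ⧸ p)[X]) ∣ X ^ d - C α := by
      have h := sub_dvd_pow_sub_pow (X ^ m : ((𝓞 K) ⧸ p)[X]) (C b) q
      rwa [← pow_mul, ← C_pow, hb, mul_comm m q, ← hm] at h
    obtain ⟨B, hB⟩ := hdvd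
    have hA0 : (X ^ m - C b : ((𝓞 K) ⧸ p)[X]) ≠ 0 := X_pow_sub_C_ne_zero hm1 b
    have hB0 : B ≠ 0 := by
      rintro rfl
      rw [mul_zero] at hB
      exact hα.ne_zero hB
    rcases hα.isUnit_or_isUnit hB with hA | hBu
    · have := Polynomial.natDegree_eq_zero_of_isUnit hA
      rw [natDegree_X_pow_sub_C] at this
      omega
    · have hdeq := congrArg natDegree hB
      rw [natDegree_X_pow_sub_C, natDegree_mul hA0 hB0, natDegree_X_pow_sub_C,
        Polynomial.natDegree_eq_zero_of_isUnit hBu] at hdeq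
      omega
  -- Key: q prime dividing d implies q ∣ N - 1
  have hq1 : ∀ q : ℕ, q.Prime → q ∣ d → q ∣ N - 1 := by
    intro q hq hqd
    by_contra hndvd
    have hcop : (Nat.card ((𝓞 K) ⧸ p)ˣ).Coprime q := by
      have : Nat.card ((𝓞 K) ⧸ p)ˣ = N - 1 := by
        rw [Nat.card_eq_fintype_card, Fintype.card_units, hNcard]
      rw [this]
      exact ((hq.coprime_iff_not_dvd.mpr hndvd).symm)
    obtain ⟨b, hb⟩ := aux_pow_surj hq.pos hcop α
    exact hnotpow q hq.two_le hqd b hb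
  constructor
  · intro q hq hqd
    have hdvd := hq1 q hq hqd
    have : N ≡ 1 [MOD q] := ((Nat.modEq_iff_dvd' (by omega)).mpr hdvd).symm
    have := (ZMod.natCast_eq_natCast_iff _ _ _).mpr this
    simpa using this
  · intro h4d
    have h2d : 2 ∣ d := dvd_trans ⟨2, rfl⟩ h4d
    have h2 : 2 ∣ N - 1 := hq1 2 Nat.prime_two h2d
    by_contra h1
    have hmod : N % 4 = 3 := by
      have hne : ¬ (N ≡ 1 [MOD 4]) := by
        intro hc
        exact h1 (by simpa using (ZMod.natCast_eq_natCast_iff _ _ _).mpr hc)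
      unfold Nat.ModEq at hne
      omega
    have hcard4 : Fintype.card ((𝓞 K) ⧸ p) % 4 = 3 := by rw [← hNcard]; exact hmod
    have hns1 : ¬ IsSquare (-1 : (𝓞 K) ⧸ p) := by
      rw [FiniteField.isSquare_neg_one_iff]
      simp [hcard4]
    have hnsα : ¬ IsSquare α := by
      rintro ⟨r, hr⟩
      exact hnotpow 2 le_rfl h2d r (by rw [sq]; exact hr.symm)
    have hα0 : α ≠ 0 := by
      rintro h
      exact hnsα (h ▸ (⟨0, by simp⟩ : IsSquare (0 : (𝓞 K) ⧸ p)))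
    have hsq : IsSquare (-α) := by
      have c1 : quadraticChar ((𝓞 K) ⧸ p) (-1) = -1 := quadraticChar_neg_one_iff_not_isSquare.mpr hns1
      have c2 : quadraticChar ((𝓞 K) ⧸ p) α = -1 := quadraticChar_neg_one_iff_not_isSquare.mpr hnsα
      have hmul : quadraticChar ((𝓞 K) ⧸ p) (-α) = 1 := by
        rw [show (-α : (𝓞 K) ⧸ p) = -1 * α by ring, map_mul, c1, c2]
        ring
      exact (quadraticChar_one_iff_isSquare (by simpa using hα0)).mp hmul
    obtain ⟨β, hβ⟩ := hsq
    have hβ0 : β ≠ 0 := by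
      rintro rfl
      rw [mul_zero, neg_eq_zero] at hβ
      exact hα0 hβ
    have h2F : (2 : (𝓞 K) ⧸ p) ≠ 0 := by
      refine Ring.two_ne_zero ?_
      intro hc
      have := FiniteField.even_card_of_char_two hc
      omega
    set t : (𝓞 K) ⧸ p := β / 2 with htdef
    have ht0 : t ≠ 0 := div_ne_zero hβ0 h2F
    obtain ⟨k, hk⟩ : ∃ k : ℕ, 4 * k = N + 1 := ⟨(N + 1) / 4, by omega⟩
    have htN : t ^ (Fintype.card ((𝓞 K) ⧸ p) - 1) = 1 := FiniteField.pow_card_sub_one_eq_one t ht0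
    set γ : (𝓞 K) ⧸ p := t ^ k with hγdef
    have hγ4 : γ ^ 4 = t ^ 2 := by
      rw [hγdef, ← pow_mul]
      have hexp : k * 4 = (Fintype.card ((𝓞 K) ⧸ p) - 1) + 2 := by rw [← hNcard]; omega
      rw [hexp, pow_add, htN, one_mul]
    have hαval : α = -4 * γ ^ 4 := by
      rw [hγ4, htdef]
      have : α = -(β * β) := by rw [← hβ]; ring
      rw [this]
      field_simp
      ring
    obtain ⟨m, hm⟩ := h4d
    have hm1 : 1 ≤ m := by omega
    have hfact : (X ^ d - C α : ((𝓞 K) ⧸ p)[X]) =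
        (X ^ (2 * m) - C (2 * γ) * X ^ m + C (2 * γ ^ 2)) *
          (X ^ (2 * m) + C (2 * γ) * X ^ m + C (2 * γ ^ 2)) := by
      rw [hαval, hm]
      simp only [C_mul, C_neg, C_pow, map_ofNat]
      ring
    have hcoeffA : ((X ^ (2 * m) - C (2 * γ) * X ^ m + C (2 * γ ^ 2) : ((𝓞 K) ⧸ p)[X])).coeff (2 * m) = 1 := by
      have hne1 : ¬ (m = 2 * m) := by omega
      have hne2 : ¬ (2 * m = 0) := by omega
      rw [coeff_add, coeff_sub, coeff_X_pow, coeff_C_mul, coeff_X_pow, coeff_C]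
      have hne3 : ¬ (2 * m = m) := by omega
      simp [hne1, hne2, hne3]
    have hcoeffB : ((X ^ (2 * m) + C (2 * γ) * X ^ m + C (2 * γ ^ 2) : ((𝓞 K) ⧸ p)[X])).coeff (2 * m) = 1 := by
      have hne1 : ¬ (m = 2 * m) := by omega
      have hne2 : ¬ (2 * m = 0) := by omega
      rw [coeff_add, coeff_add, coeff_X_pow, coeff_C_mul, coeff_X_pow, coeff_C]
      have hne3 : ¬ (2 * m = m) := by omega
      simp [hne1, hne2, hne3]
    rcases hα.isUnit_or_isUnit hfact with hA | hB
    · exact aux_not_isUnit (k := 2 * m) (by omega) (by rw [hcoeffA]; exact one_ne_zero) hA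
    · exact aux_not_isUnit (k := 2 * m) (by omega) (by rw [hcoeffB]; exact one_ne_zero) hB
end

section
/- Let f(X) = r(X-a)^d + s(X-a)^k + b with a,b,r,s in a field K of characteristic 0, r,s ≠ 0, d odd, and 1 < k < d coprime to d. Then the critical points of f (roots of f') are exactly a and the d-k points γ_i = a + ζ_{d-k}^i · ((-ks)/(dr))^{1/(d-k)} for i = 1, ..., d-k; these points are pairwise distinct; the multiplicity of a as a root of f(X) - f(a) is k, and the multiplicity of each γ_i as a root of f(X) - f(γ_i) is 2. -/
open Polynomial

/-- Let `f(X) = r(X-a)^d + s(X-a)^k + b` with `a, b, r, s` in a field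
`K` of characteristic `0`, `r, s ≠ 0`, `d` odd, and `1 < k < d` coprime to `d`.
Then, in an algebraic closure `Ω` of `K`, the critical points of `f` (roots of
`f'`) are exactly `a` and the `d-k` points `γ i = a + ζ^i·c` for `i = 1, …, d-k`,
where `ζ` is a primitive `(d-k)`-th root of unity and `c` is a `(d-k)`-th root of
`(-ks)/(dr)`; these points are pairwise distinct; the multiplicity of `a` as a root
of `f(X) - f(a)` is `k`, and the multiplicity of each `γ i` as a root of
`f(X) - f(γ i)` is `2`. -/
theorem trinomial_critical_points
    {K : Type*} [Field K] [CharZero K] (a b r s : K) (hr : r ≠ 0) (hs : s ≠ 0)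
    (d k : ℕ) (hdodd : Odd d) (hk1 : 1 < k) (hkd : k < d) (hcop : Nat.Coprime k d)
    (Ω : Type*) [Field Ω] [IsAlgClosed Ω] [Algebra K Ω]  [IsAlgClosure K Ω]
    (ζ : Ω) (hζ : IsPrimitiveRoot ζ (d - k))
    (c : Ω) (hc : c ^ (d - k) = (-(k : Ω) * algebraMap K Ω s) / ((d : Ω) * algebraMap K Ω r))
    (γ : ℕ → Ω) (hγ : ∀ i, γ i = algebraMap K Ω a + ζ ^ i * c)
    (f : Polynomial Ω)
    (hf : f = C (algebraMap K Ω r) * (X - C (algebraMap K Ω a)) ^ d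
        + C (algebraMap K Ω s) * (X - C (algebraMap K Ω a)) ^ k
        + C (algebraMap K Ω b)) :
    (∀ x : Ω, (derivative f).eval x = 0 ↔
        (x = algebraMap K Ω a ∨ ∃ i ∈ Finset.Icc 1 (d - k), x = γ i)) ∧
    (∀ i ∈ Finset.Icc 1 (d - k), γ i ≠ algebraMap K Ω a) ∧
    (∀ i ∈ Finset.Icc 1 (d - k), ∀ j ∈ Finset.Icc 1 (d - k), γ i = γ j → i = j) ∧
    (f - C (f.eval (algebraMap K Ω a))).rootMultiplicity (algebraMap K Ω a) = k ∧
    (∀ i ∈ Finset.Icc 1 (d - k),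
      (f - C (f.eval (γ i))).rootMultiplicity (γ i) = 2) := by
  set A := algebraMap K Ω a with hA
  set R := algebraMap K Ω r with hRdef
  set S := algebraMap K Ω s with hSdef
  set B := algebraMap K Ω b with hBdef
  have hR : R ≠ 0 := by simpa [hRdef] using hr
  have hS : S ≠ 0 := by simpa [hSdef] using hs
  haveI : CharZero Ω := charZero_of_injective_algebraMap (algebraMap K Ω).injective
  have hd1 : 1 ≤ d := by omega
  have hd0 : (d : Ω) ≠ 0 := Nat.cast_ne_zero.mpr (by omega)
  have hk0 : (k : Ω) ≠ 0 := Nat.cast_ne_zero.mpr (by omega)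
  have hn : 0 < d - k := by omega
  have : NeZero (d - k) := ⟨by omega⟩
  have hcn : c ^ (d - k) ≠ 0 := by
    rw [hc]
    exact div_ne_zero (mul_ne_zero (neg_ne_zero.mpr hk0) hS) (mul_ne_zero hd0 hR)
  have hc0 : c ≠ 0 := fun h => hcn (by simp [h, zero_pow hn.ne'])
  have hζ0 : ζ ≠ 0 := hζ.ne_zero (by omega)
  -- derivative
  have hf' : derivative f =
      C ((d : Ω) * R) * (X - C A) ^ (d - 1) + C ((k : Ω) * S) * (X - C A) ^ (k - 1) := by
    rw [hf]
    simp only [derivative_add, derivative_C_mul, derivative_X_sub_C_pow, derivative_C, add_zero,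
      map_mul]
    ring
  have hev : ∀ x : Ω, (derivative f).eval x
      = (x - A) ^ (k - 1) * ((d : Ω) * R * (x - A) ^ (d - k) + (k : Ω) * S) := by
    intro x
    rw [hf']
    simp only [eval_add, eval_mul, eval_pow, eval_sub, eval_X, eval_C]
    rw [show d - 1 = (k - 1) + (d - k) by omega, pow_add]
    ring
  have hγsub : ∀ i, γ i - A = ζ ^ i * c := by intro i; rw [hγ i]; ring
  have hγpow : ∀ i, (γ i - A) ^ (d - k) = c ^ (d - k) := by
    intro i
    rw [hγsub, mul_pow, ← pow_mul, mul_comm i, pow_mul, hζ.pow_eq_one, one_pow, one_mul]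
  have hcrit2 : ∀ i, (d : Ω) * R * (γ i - A) ^ (d - k) = -((k : Ω) * S) := by
    intro i
    rw [hγpow, hc]
    field_simp
  have hcrit : ∀ i, (d : Ω) * R * (γ i - A) ^ (d - k) + (k : Ω) * S = 0 := by
    intro i; rw [hcrit2]; ring
  have hmod : ∀ m : ℕ, ζ ^ m = ζ ^ (m % (d - k)) := by
    intro m
    conv_lhs => rw [← Nat.mod_add_div m (d - k)]
    rw [pow_add, pow_mul, hζ.pow_eq_one, one_pow, mul_one]
  refine ⟨?_, ?_, ?_, ?_, ?_⟩
  · intro x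
    constructor
    · intro hx
      rw [hev] at hx
      rcases mul_eq_zero.mp hx with h | h
      · left
        have := pow_eq_zero_iff (n := k - 1) (by omega) |>.mp h
        exact sub_eq_zero.mp this
      · right
        have hx2 : (x - A) ^ (d - k) = c ^ (d - k) := by
          rw [hc]
          field_simp
          linear_combination h
        have hone : ((x - A) / c) ^ (d - k) = 1 := by
          rw [div_pow, hx2, div_self hcn]
        obtain ⟨i, hi, hzi⟩ := hζ.eq_pow_of_pow_eq_one hone
        have hxγ : x = A + ζ ^ i * c := by
          have : ζ ^ i * c = x - A := by
            rw [hzi]; field_simp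
          rw [this]; ring
        rcases Nat.eq_zero_or_pos i with rfl | hipos
        · exact ⟨d - k, Finset.mem_Icc.mpr ⟨hn, le_rfl⟩, by
            rw [hγ, hζ.pow_eq_one]; simpa using hxγ⟩
        · exact ⟨i, Finset.mem_Icc.mpr ⟨hipos, by omega⟩, by rw [hγ]; exact hxγ⟩
    · rintro (rfl | ⟨i, hi, rfl⟩)
      · rw [hev]
        simp [zero_pow (show k - 1 ≠ 0 by omega)]
      · rw [hev, hcrit i, mul_zero]
  · intro i hi h
    have := hγsub i
    rw [h, sub_self] at this
    exact mul_ne_zero (pow_ne_zero _ hζ0) hc0 this.symm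
  · intro i hi j hj hij
    rw [Finset.mem_Icc] at hi hj
    have h1 : ζ ^ i = ζ ^ j := by
      have e : ζ ^ i * c = ζ ^ j * c := by rw [← hγsub i, ← hγsub j, hij]
      exact mul_right_cancel₀ hc0 e
    have h2 : i % (d - k) = j % (d - k) := by
      apply hζ.pow_inj (Nat.mod_lt _ hn) (Nat.mod_lt _ hn)
      rw [← hmod, ← hmod, h1]
    rcases eq_or_lt_of_le hi.2 with rfl | hi'
    · rcases eq_or_lt_of_le hj.2 with h | hj'
      · omega
      · rw [Nat.mod_self, Nat.mod_eq_of_lt hj'] at h2; omega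
    · rcases eq_or_lt_of_le hj.2 with rfl | hj'
      · rw [Nat.mod_self, Nat.mod_eq_of_lt hi'] at h2; omega
      · rwa [Nat.mod_eq_of_lt hi', Nat.mod_eq_of_lt hj'] at h2
  · have hfA : f.eval A = B := by
      rw [hf]
      simp [zero_pow (show d ≠ 0 by omega), zero_pow (show k ≠ 0 by omega)]
    have hfac : f - C B = (X - C A) ^ k * (C R * (X - C A) ^ (d - k) + C S) := by
      have hd' : (X - C A) ^ d = (X - C A) ^ k * (X - C A) ^ (d - k) := by
        rw [← pow_add]; congr 1; omega
      rw [hf, hd']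
      ring
    have hq : (C R * (X - C A) ^ (d - k) + C S).eval A ≠ 0 := by
      simp [zero_pow hn.ne', hS]
    rw [hfA, hfac, rootMultiplicity_mul
      (mul_ne_zero (pow_ne_zero _ (X_sub_C_ne_zero A)) (fun h => hq (by rw [h]; simp))),
      rootMultiplicity_X_sub_C_pow, rootMultiplicity_eq_zero hq, add_zero]
  · intro i hi
    rw [Finset.mem_Icc] at hi
    set t := γ i with ht
    set g := f - C (f.eval t) with hg
    have hu0 : t - A ≠ 0 := by
      rw [hγsub i]; exact mul_ne_zero (pow_ne_zero _ hζ0) hc0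
    have hgd : derivative g = derivative f := by
      rw [hg, derivative_sub, derivative_C, sub_zero]
    have hf'' : derivative (derivative f) =
        C ((d : Ω) * R * ((d - 1 : ℕ) : Ω)) * (X - C A) ^ (d - 2)
        + C ((k : Ω) * S * ((k - 1 : ℕ) : Ω)) * (X - C A) ^ (k - 2) := by
      rw [hf', derivative_add, derivative_C_mul, derivative_C_mul,
        derivative_X_sub_C_pow, derivative_X_sub_C_pow,
        show d - 1 - 1 = d - 2 by omega, show k - 1 - 1 = k - 2 by omega]
      simp only [map_mul]
      ring
    have h2 : (derivative^[2] g).eval t ≠ 0 := by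
      have : derivative^[2] g = derivative (derivative f) := by
        rw [Function.iterate_succ, Function.iterate_one, Function.comp_apply, hgd]
      rw [this, hf'']
      simp only [eval_add, eval_mul, eval_pow, eval_sub, eval_X, eval_C]
      rw [show d - 2 = (k - 2) + (d - k) by omega, pow_add]
      have hval : (d : Ω) * R * ((d - 1 : ℕ) : Ω) * ((t - A) ^ (k - 2) * (t - A) ^ (d - k))
          + (k : Ω) * S * ((k - 1 : ℕ) : Ω) * (t - A) ^ (k - 2)
          = (t - A) ^ (k - 2) * ((k : Ω) * S) * (((k : ℕ) : Ω) - ((d : ℕ) : Ω)) := by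
        have hcast1 : ((d - 1 : ℕ) : Ω) = (d : Ω) - 1 := by
          rw [Nat.cast_sub hd1]; norm_num
        have hcast2 : ((k - 1 : ℕ) : Ω) = (k : Ω) - 1 := by
          rw [Nat.cast_sub (by omega)]; norm_num
        rw [hcast1, hcast2]
        linear_combination ((t - A) ^ (k - 2) * ((d:Ω) - 1)) * hcrit2 i
      rw [hval]
      refine mul_ne_zero (mul_ne_zero (pow_ne_zero _ hu0) (mul_ne_zero hk0 hS)) ?_
      rw [sub_ne_zero]
      exact fun h => (by omega : k ≠ d) (Nat.cast_injective h)
    have hg0 : g ≠ 0 := by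
      intro h
      apply h2
      simp [h]
    have hlt : 1 < g.rootMultiplicity t := by
      apply lt_rootMultiplicity_of_isRoot_iterate_derivative_of_mem_nonZeroDivisors' hg0
      · intro m hm
        interval_cases m
        · simp [hg, IsRoot]
        · rw [Function.iterate_one, hgd, IsRoot.def, hev, hcrit i, mul_zero]
      · intro m _ hm
        exact mem_nonZeroDivisors_of_ne_zero (Nat.cast_ne_zero.mpr hm)
    have hle : ¬ 2 < g.rootMultiplicity t := by
      intro h
      exact h2 (isRoot_iterate_derivative_of_lt_rootMultiplicity h)
    omega
end
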